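/- For a partition λ = (λ₁ ≥ … ≥ λ_N ≥ 0) and complex numbers v, z₁,…,z_N with z_i ≠ z_j and z_j ≠ v·z_i for i ≠ j: ∑_{σ∈S_N} ∏_{i=1}^N z_{σ(i)}^{λ_i+N−i} · ∏_{i<j, σ(i)>σ(j)} (z_{σ(i)}−v·z_{σ(j)})/(z_{σ(j)}−v·z_{σ(i)}) · ∏_{1≤i<j≤N} (z_{σ(j)}−v·z_{σ(i)})/(z_{σ(i)}−z_{σ(j)}) = ∏_{1≤i<j≤N}(z_j − v·z_i) · s_λ(z₁,…,z_N), where s_λ is the Schur polynomial. -/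

import Mathlib

open Finset

lemma pairs_prod_eq_Ioi {N : ℕ} (f : Fin N → Fin N → ℂ) :
    ∏ p ∈ Finset.univ.filter (fun p : Fin N × Fin N => p.1 < p.2), f p.1 p.2 =
      ∏ i : Fin N, ∏ j ∈ Ioi i, f i j := by
  rw [Finset.prod_filter, ← Finset.univ_product_univ, Finset.prod_product]
  refine Finset.prod_congr rfl fun i _ => ?_
  rw [← Finset.prod_filter]
  refine Finset.prod_congr ?_ fun _ _ => rfl
  ext j; simp

lemma prod_pairs_perm {N : ℕ} (σ : Equiv.Perm (Fin N)) (f : Fin N → Fin N → ℂ) :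
    ∏ p ∈ Finset.univ.filter (fun p : Fin N × Fin N => p.1 < p.2),
      (if σ p.2 < σ p.1 then f (σ p.2) (σ p.1) else f (σ p.1) (σ p.2)) =
    ∏ p ∈ Finset.univ.filter (fun p : Fin N × Fin N => p.1 < p.2), f p.1 p.2 := by
  refine Finset.prod_nbij'
    (fun p => if σ p.1 < σ p.2 then (σ p.1, σ p.2) else (σ p.2, σ p.1))
    (fun q => if σ⁻¹ q.1 < σ⁻¹ q.2 then (σ⁻¹ q.1, σ⁻¹ q.2) else (σ⁻¹ q.2, σ⁻¹ q.1))
    ?_ ?_ ?_ ?_ ?_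
  · intro p hp
    have hlt : p.1 < p.2 := (Finset.mem_filter.1 hp).2
    have hne : σ p.1 ≠ σ p.2 := fun h => (ne_of_lt hlt) (σ.injective h)
    rcases hne.lt_or_gt with h | h
    · simp [h]
    · simp [not_lt.2 h.le, h]
  · intro q hq
    have hlt : q.1 < q.2 := (Finset.mem_filter.1 hq).2
    have hne : σ⁻¹ q.1 ≠ σ⁻¹ q.2 := fun h => (ne_of_lt hlt) (σ⁻¹.injective h)
    rcases hne.lt_or_gt with h | h
    · rw [if_pos h]; simpa using h
    · rw [if_neg (not_lt.2 h.le)]; simpa using h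
  · intro p hp
    have hlt : p.1 < p.2 := (Finset.mem_filter.1 hp).2
    have hne : σ p.1 ≠ σ p.2 := fun h => (ne_of_lt hlt) (σ.injective h)
    rcases hne.lt_or_gt with h | h
    · simp [h, hlt]
    · simp [not_lt.2 h.le, not_lt.2 hlt.le, h]
  · intro q hq
    have hlt : q.1 < q.2 := (Finset.mem_filter.1 hq).2
    have hne : σ⁻¹ q.1 ≠ σ⁻¹ q.2 := fun h => (ne_of_lt hlt) (σ⁻¹.injective h)
    rcases hne.lt_or_gt with h | h
    · rw [if_pos h]; simp [h, hlt]
    · rw [if_neg (not_lt.2 h.le)]; simp [not_lt.2 hlt.le, h]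
  · intro p hp
    have hlt : p.1 < p.2 := (Finset.mem_filter.1 hp).2
    have hne : σ p.1 ≠ σ p.2 := fun h => (ne_of_lt hlt) (σ.injective h)
    rcases hne.lt_or_gt with h | h
    · simp [h, not_lt.2 h.le]
    · simp [h, not_lt.2 h.le]

lemma prod_pairs_rev {N : ℕ} (f : Fin N → Fin N → ℂ) :
    ∏ p ∈ Finset.univ.filter (fun p : Fin N × Fin N => p.1 < p.2), f p.2.rev p.1.rev =
    ∏ p ∈ Finset.univ.filter (fun p : Fin N × Fin N => p.1 < p.2), f p.1 p.2 := by
  refine Finset.prod_nbij' (fun p => (p.2.rev, p.1.rev)) (fun q => (q.2.rev, q.1.rev))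
    ?_ ?_ ?_ ?_ ?_ <;> intro p hp <;>
    simp_all [Fin.rev_lt_rev, Fin.rev_rev, (Finset.mem_filter.1 hp).2]

lemma prod_pairs_sign {N : ℕ} (σ : Equiv.Perm (Fin N)) (z : Fin N → ℂ) :
    ∏ p ∈ Finset.univ.filter (fun p : Fin N × Fin N => p.1 < p.2), (z (σ p.2) - z (σ p.1)) =
      ((Equiv.Perm.sign σ : ℤ) : ℂ) *
        ∏ p ∈ Finset.univ.filter (fun p : Fin N × Fin N => p.1 < p.2), (z p.2 - z p.1) := by
  have h2 : Matrix.vandermonde (z ∘ σ) = (Matrix.vandermonde z).submatrix σ id := by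
    ext i j; simp [Matrix.vandermonde]
  rw [pairs_prod_eq_Ioi (fun i j => z (σ j) - z (σ i)), pairs_prod_eq_Ioi (fun i j => z j - z i)]
  have h1 := Matrix.det_vandermonde (z ∘ σ)
  simp only [Function.comp] at h1
  rw [← h1, h2, Matrix.det_permute, Matrix.det_vandermonde]

lemma det_rev_vandermonde {N : ℕ} (z : Fin N → ℂ) :
    (Matrix.of fun i j : Fin N => z i ^ (N - 1 - (j : ℕ))).det =
      ∏ p ∈ Finset.univ.filter (fun p : Fin N × Fin N => p.1 < p.2), (z p.1 - z p.2) := by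
  have h : (Matrix.of fun i j : Fin N => z i ^ (N - 1 - (j : ℕ))) =
      (Matrix.vandermonde (z ∘ Fin.rev)).submatrix Fin.revPerm Fin.revPerm := by
    ext i j
    simp only [Matrix.of_apply, Matrix.submatrix_apply, Matrix.vandermonde_apply,
      Fin.revPerm_apply, Function.comp_apply, Fin.rev_rev, Fin.val_rev]
    have hj : N - 1 - (j:ℕ) = N - ((j:ℕ)+1) := by omega
    rw [hj]
  rw [h, Matrix.det_submatrix_equiv_self, Matrix.det_vandermonde]
  simp only [Function.comp]
  rw [← pairs_prod_eq_Ioi (fun i j : Fin N => z (Fin.rev j) - z (Fin.rev i))]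
  exact prod_pairs_rev (fun a b => z a - z b)


/-- Tokuyama-type evaluation of the free-fermionic six-vertex partition function,
with the Schur polynomial given by the bialternant formula. -/
theorem tokuyama_partition_function (N : ℕ) (hN : 0 < N) (lam : Fin N → ℕ)
    (hlam : Antitone lam) (v : ℂ) (z : Fin N → ℂ)
    (hzz : ∀ i j : Fin N, i ≠ j → z i ≠ z j)
    (hvz : ∀ i j : Fin N, i ≠ j → z j ≠ v * z i) :
    ∑ σ : Equiv.Perm (Fin N),
      ((∏ i : Fin N, z (σ i) ^ (lam i + (N - 1 - (i : ℕ)))) *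
        (∏ p ∈ Finset.univ.filter (fun p : Fin N × Fin N => p.1 < p.2 ∧ σ p.2 < σ p.1),
          (z (σ p.1) - v * z (σ p.2)) / (z (σ p.2) - v * z (σ p.1))) *
        (∏ p ∈ Finset.univ.filter (fun p : Fin N × Fin N => p.1 < p.2),
          (z (σ p.2) - v * z (σ p.1)) / (z (σ p.1) - z (σ p.2)))) =
    (∏ p ∈ Finset.univ.filter (fun p : Fin N × Fin N => p.1 < p.2), (z p.2 - v * z p.1)) *
      ((Matrix.of fun i j : Fin N => z i ^ (lam j + (N - 1 - (j : ℕ)))).det /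
        (Matrix.of fun i j : Fin N => z i ^ (N - 1 - (j : ℕ))).det) := by
  classical
  set S : Finset (Fin N × Fin N) := Finset.univ.filter (fun p : Fin N × Fin N => p.1 < p.2)
    with hS
  set C : ℂ := ∏ p ∈ S, (z p.2 - v * z p.1) with hC
  set V : ℂ := ∏ p ∈ S, (z p.1 - z p.2) with hV
  have hVne : V ≠ 0 := by
    rw [hV]
    exact Finset.prod_ne_zero_iff.2 fun p hp =>
      sub_ne_zero.2 (hzz _ _ (ne_of_lt (Finset.mem_filter.1 hp).2))
  have hterm : ∀ σ : Equiv.Perm (Fin N),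
      ((∏ i : Fin N, z (σ i) ^ (lam i + (N - 1 - (i : ℕ)))) *
        (∏ p ∈ Finset.univ.filter (fun p : Fin N × Fin N => p.1 < p.2 ∧ σ p.2 < σ p.1),
          (z (σ p.1) - v * z (σ p.2)) / (z (σ p.2) - v * z (σ p.1))) *
        (∏ p ∈ S, (z (σ p.2) - v * z (σ p.1)) / (z (σ p.1) - z (σ p.2)))) =
      (((Equiv.Perm.sign σ : ℤ) : ℂ) * ∏ i : Fin N, z (σ i) ^ (lam i + (N - 1 - (i : ℕ)))) *
        (C / V) := by
    intro σ
    have hinj : ∀ i j : Fin N, i ≠ j → σ i ≠ σ j := fun i j h e => h (σ.injective e)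
    have hfil : Finset.univ.filter (fun p : Fin N × Fin N => p.1 < p.2 ∧ σ p.2 < σ p.1)
        = S.filter (fun p => σ p.2 < σ p.1) := by
      rw [hS, Finset.filter_filter]
    rw [hfil, Finset.prod_filter, mul_assoc, ← Finset.prod_mul_distrib]
    have hAB : ∏ p ∈ S, ((if σ p.2 < σ p.1 then
          (z (σ p.1) - v * z (σ p.2)) / (z (σ p.2) - v * z (σ p.1)) else 1) *
          ((z (σ p.2) - v * z (σ p.1)) / (z (σ p.1) - z (σ p.2)))) =
        (∏ p ∈ S, (if σ p.2 < σ p.1 then z (σ p.1) - v * z (σ p.2)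
            else z (σ p.2) - v * z (σ p.1))) / ∏ p ∈ S, (z (σ p.1) - z (σ p.2)) := by
      rw [← Finset.prod_div_distrib]
      refine Finset.prod_congr rfl fun p hp => ?_
      have hne : σ p.1 ≠ σ p.2 := hinj _ _ (ne_of_lt (Finset.mem_filter.1 hp).2)
      by_cases h : σ p.2 < σ p.1
      · have hb : z (σ p.2) - v * z (σ p.1) ≠ 0 := sub_ne_zero.2 (hvz _ _ hne)
        rw [if_pos h, if_pos h, div_mul_div_comm,
          mul_comm (z (σ p.1) - v * z (σ p.2)) (z (σ p.2) - v * z (σ p.1)),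
          mul_div_mul_left _ _ hb]
      · rw [if_neg h, if_neg h, one_mul]
    rw [hAB]
    have hnum : (∏ p ∈ S, (if σ p.2 < σ p.1 then z (σ p.1) - v * z (σ p.2)
        else z (σ p.2) - v * z (σ p.1))) = C := by
      rw [hC, hS]
      exact prod_pairs_perm σ (fun a b => z b - v * z a)
    have hden : ∏ p ∈ S, (z (σ p.1) - z (σ p.2)) = ((Equiv.Perm.sign σ : ℤ) : ℂ) * V := by
      have h1 : ∏ p ∈ S, (z (σ p.1) - z (σ p.2)) =
          (-1 : ℂ) ^ S.card * ∏ p ∈ S, (z (σ p.2) - z (σ p.1)) := by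
        rw [← Finset.prod_const, ← Finset.prod_mul_distrib]
        exact Finset.prod_congr rfl fun p _ => by ring
      have h2 : V = (-1 : ℂ) ^ S.card * ∏ p ∈ S, (z p.2 - z p.1) := by
        rw [hV, ← Finset.prod_const, ← Finset.prod_mul_distrib]
        exact Finset.prod_congr rfl fun p _ => by ring
      rw [h1, hS, prod_pairs_sign σ z, h2]
      ring
    rw [hnum, hden]
    have hsign : C / (((Equiv.Perm.sign σ : ℤ) : ℂ) * V) =
        ((Equiv.Perm.sign σ : ℤ) : ℂ) * (C / V) := by
      rcases Int.units_eq_one_or (Equiv.Perm.sign σ) with h | h <;> rw [h] <;> push_cast <;>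
        [rw [one_mul, one_mul]; rw [neg_one_mul, div_neg, neg_one_mul]]
    rw [hsign]
    ring
  rw [Finset.sum_congr rfl (fun σ _ => hterm σ), ← Finset.sum_mul, det_rev_vandermonde z, ← hS,
    ← hV, Matrix.det_apply']
  have hM : ∀ σ : Equiv.Perm (Fin N),
      (∏ i, (Matrix.of fun i j : Fin N => z i ^ (lam j + (N - 1 - (j : ℕ)))) (σ i) i) =
      ∏ i : Fin N, z (σ i) ^ (lam i + (N - 1 - (i : ℕ))) := fun σ => rfl
  simp only [hM]
  ring
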